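/- Suppose all four entries of p are strictly positive. Then for all graphs g_c, g_b on [n] and all permutations π, π' of [n], P[Π = π and (G_c, G_b) = (g_c, g_b)] · (p01·p10/(p00·p11))^{Δ(g_c∘l(π'), g_b)/2} = P[Π = π' and (G_c, G_b) = (g_c, g_b)] · (p01·p10/(p00·p11))^{Δ(g_c∘l(π), g_b)/2}; that is, the posterior probability of a permutation π given (G_c, G_b) = (g_c, g_b) is proportional to (p01·p10/(p00·p11))^{Δ(g_c∘l(π), g_b)/2}. -/

import Mathlib

open Finset

/-- Unordered pairs of distinct vertices of `[n]`. -/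
abbrev VPairs (n : ℕ) := {e : Sym2 (Fin n) // ¬ e.IsDiag}

/-- A graph on `[n]`, identified with its edge-indicator function. -/
abbrev FGraph (n : ℕ) := VPairs n → Bool

/-- The permutation of vertex pairs induced by a permutation of vertices. -/
def pairPerm {n : ℕ} (π : Equiv.Perm (Fin n)) : Equiv.Perm (VPairs n) where
  toFun e := ⟨e.val.map π, fun h => e.prop ((Sym2.isDiag_map π.injective).mp h)⟩
  invFun e := ⟨e.val.map π.symm, fun h => e.prop ((Sym2.isDiag_map π.symm.injective).mp h)⟩
  left_inv e := by
    ext1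
    simp [Sym2.map_map]
  right_inv e := by
    ext1
    simp [Sym2.map_map]

/-- Hamming distance between two labelings. -/
def hamming {S : Type*} [Fintype S] [DecidableEq S] (f g : S → Bool) : ℕ :=
  (Finset.univ.filter fun e => f e ≠ g e).card

/-- `δ(τ; f, g) = (Δ(f∘τ, g) − Δ(f, g))/2`, as a rational number. -/
def deltaQ {S : Type*} [Fintype S] [DecidableEq S] (τ : Equiv.Perm S) (f g : S → Bool) : ℚ :=
  (((hamming (f ∘ τ) g : ℚ)) - (hamming f g : ℚ)) / 2

/-- The entry `(i,j)` of the type `μ(f,g)`. -/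
def typeCount {S : Type*} [Fintype S] [DecidableEq S] (f g : S → Bool) (i j : Bool) : ℕ :=
  (Finset.univ.filter fun e => f e = i ∧ g e = j).card

/-- The joint edge distribution determined by a probability vector. -/
def pv (p11 p10 p01 p00 : ℝ) : Bool → Bool → ℝ :=
  fun a b => if a then (if b then p11 else p10) else (if b then p01 else p00)

open Classical in
/-- The probability of an event under the correlated Erdős–Rényi model `ER(n,p)`. -/
noncomputable def ERprob (n : ℕ) (p : Bool → Bool → ℝ)
    (E : FGraph n × FGraph n → Prop) : ℝ :=
  ∑ gab : FGraph n × FGraph n,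
    (if E gab then (1 : ℝ) else 0) * ∏ e : VPairs n, p (gab.1 e) (gab.2 e)

open Classical in
/-- The probability of an event under the joint distribution of a uniformly random
permutation `Π` of `[n]` together with `(G_a, G_b) ~ ER(n,p)` independent of it. -/
noncomputable def ERPermProb (n : ℕ) (p : Bool → Bool → ℝ)
    (E : Equiv.Perm (Fin n) → FGraph n × FGraph n → Prop) : ℝ :=
  (∑ π : Equiv.Perm (Fin n), ∑ gab : FGraph n × FGraph n,
    (if E π gab then (1 : ℝ) else 0) * ∏ e : VPairs n, p (gab.1 e) (gab.2 e))
    / (Nat.factorial n)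

/-- The anonymized graph `G_c`, determined by `G_c(l(Π)(e)) = G_a(e)`. -/
def anonymize {n : ℕ} (π : Equiv.Perm (Fin n)) (ga : FGraph n) : FGraph n :=
  fun e => ga ((pairPerm π).symm e)

/-- `S_{n,nt}`: the permutations of `[n]` with exactly `nt` non-fixed points. -/
def Snn (n nt : ℕ) : Finset (Equiv.Perm (Fin n)) :=
  Finset.univ.filter fun π => (Finset.univ.filter fun x => π x ≠ x).card = nt

open Classical in
/-- The generating function `A_{S,τ}(w,z)`; here `z^δ` is expressed as `√z^(2δ)`. -/
noncomputable def AgF {S : Type*} [Fintype S] (τ : Equiv.Perm S)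
    (w : Bool → Bool → ℝ) (z : ℝ) : ℝ :=
  ∑ g : S → Bool, ∑ h : S → Bool,
    (Real.sqrt z) ^ ((hamming (g ∘ τ) h : ℤ) - (hamming g h : ℤ)) *
      ∏ i : Bool, ∏ j : Bool, w i j ^ typeCount g h i j

/-- `a_ℓ(w,z)`: the generating function of a single cycle of length `ℓ`. -/
noncomputable def aGF (ℓ : ℕ) (w : Bool → Bool → ℝ) (z : ℝ) : ℝ :=
  AgF (finRotate ℓ) w z

open Classical in
/-- The number of cycles of length `ℓ` in the cycle decomposition of `τ`
(the number of points whose `τ`-orbit has size `ℓ`, divided by `ℓ`). -/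
noncomputable def cycleCount {S : Type*} [Fintype S] (τ : Equiv.Perm S) (ℓ : ℕ) : ℕ :=
  (Finset.univ.filter fun x : S =>
    (Finset.univ.filter fun y : S => τ.SameCycle x y).card = ℓ).card / ℓ

open Classical in
/-- The probability of an event under an Erdős–Rényi graph `G(n,p)`. -/
noncomputable def ERgraphProb (n : ℕ) (p : ℝ) (E : FGraph n → Prop) : ℝ :=
  ∑ g : FGraph n,
    (if E g then (1 : ℝ) else 0) * ∏ e : VPairs n, (if g e then p else 1 - p)

open Classical in
/-- The number of automorphisms of a graph. -/
noncomputable def autCard {n : ℕ} (g : FGraph n) : ℕ :=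
  (Finset.univ.filter fun π : Equiv.Perm (Fin n) =>
    ∀ e : VPairs n, g (pairPerm π e) = g e).card


section Aux

open Classical

lemma myprod_ite_one {S : Type*} [Fintype S] (P : S → Prop) [DecidablePred P] (x : ℝ) :
    (∏ e : S, (if P e then x else 1)) = x ^ (Finset.univ.filter P).card := by
  rw [Finset.prod_ite, Finset.prod_const, Finset.prod_const, one_pow, mul_one]

lemma prodPV {S : Type*} [Fintype S] [DecidableEq S] (p11 p10 p01 p00 : ℝ) (f g : S → Bool) :
    (∏ e : S, pv p11 p10 p01 p00 (f e) (g e)) =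
      p11 ^ typeCount f g true true * p10 ^ typeCount f g true false *
        p01 ^ typeCount f g false true * p00 ^ typeCount f g false false := by
  classical
  have key : ∀ e, pv p11 p10 p01 p00 (f e) (g e) =
      (if f e = true ∧ g e = true then p11 else 1) *
        (if f e = true ∧ g e = false then p10 else 1) *
        (if f e = false ∧ g e = true then p01 else 1) *
        (if f e = false ∧ g e = false then p00 else 1) := by
    intro e; cases hf : f e <;> cases hg : g e <;> simp [pv]
  simp only [key]
  rw [Finset.prod_mul_distrib, Finset.prod_mul_distrib, Finset.prod_mul_distrib,
    myprod_ite_one, myprod_ite_one, myprod_ite_one, myprod_ite_one]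
  rfl

lemma tcL1 {S : Type*} [Fintype S] [DecidableEq S] (f g : S → Bool) :
    typeCount f g true false + typeCount f g false true = hamming f g := by
  classical
  unfold typeCount hamming
  rw [Finset.card_filter, Finset.card_filter, Finset.card_filter, ← Finset.sum_add_distrib]
  apply Finset.sum_congr rfl
  intro e _
  cases hf : f e <;> cases hg : g e <;> simp [hf, hg]

lemma tcL2 {S : Type*} [Fintype S] [DecidableEq S] (f g : S → Bool) :
    typeCount f g true true + typeCount f g true false =
      (Finset.univ.filter fun e => f e = true).card := by
  classical
  unfold typeCount
  rw [Finset.card_filter, Finset.card_filter, Finset.card_filter, ← Finset.sum_add_distrib]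
  apply Finset.sum_congr rfl
  intro e _
  cases hf : f e <;> cases hg : g e <;> simp [hf, hg]

lemma tcL3 {S : Type*} [Fintype S] [DecidableEq S] (f g : S → Bool) :
    typeCount f g true true + typeCount f g false true =
      (Finset.univ.filter fun e => g e = true).card := by
  classical
  unfold typeCount
  rw [Finset.card_filter, Finset.card_filter, Finset.card_filter, ← Finset.sum_add_distrib]
  apply Finset.sum_congr rfl
  intro e _
  cases hf : f e <;> cases hg : g e <;> simp [hf, hg]

lemma tcL4 {S : Type*} [Fintype S] [DecidableEq S] (f g : S → Bool) :
    typeCount f g true true + typeCount f g true false + typeCount f g false true +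
      typeCount f g false false = Fintype.card S := by
  classical
  unfold typeCount
  rw [← Finset.card_univ, Finset.card_eq_sum_ones (Finset.univ : Finset S),
    Finset.card_filter, Finset.card_filter, Finset.card_filter, Finset.card_filter,
    ← Finset.sum_add_distrib, ← Finset.sum_add_distrib, ← Finset.sum_add_distrib]
  apply Finset.sum_congr rfl
  intro e _
  cases hf : f e <;> cases hg : g e <;> simp [hf, hg]

lemma card_comp {S : Type*} [Fintype S] [DecidableEq S] (σ : Equiv.Perm S) (h : S → Bool) :
    (Finset.univ.filter fun e => h (σ e) = true).card =
      (Finset.univ.filter fun e => h e = true).card := by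
  rw [Finset.card_filter, Finset.card_filter]
  exact Fintype.sum_equiv σ _ _ (fun x => rfl)

lemma mono_id (x y z w : ℝ) (a b c d a' b' c' d' : ℕ)
    (h1 : a + b = a' + b') (h2 : a + c = a' + c')
    (h3 : a + b + c + d = a' + b' + c' + d') :
    (x ^ a * y ^ b * z ^ c * w ^ d) ^ 2 * (z * y) ^ (b' + c') * (w * x) ^ (b + c) =
      (x ^ a' * y ^ b' * z ^ c' * w ^ d') ^ 2 * (z * y) ^ (b + c) * (w * x) ^ (b' + c') := by
  have eL : (x ^ a * y ^ b * z ^ c * w ^ d) ^ 2 * (z * y) ^ (b' + c') * (w * x) ^ (b + c) =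
      x ^ (2 * a + (b + c)) * y ^ (2 * b + (b' + c')) * z ^ (2 * c + (b' + c')) *
        w ^ (2 * d + (b + c)) := by ring
  have eR : (x ^ a' * y ^ b' * z ^ c' * w ^ d') ^ 2 * (z * y) ^ (b + c) * (w * x) ^ (b' + c') =
      x ^ (2 * a' + (b' + c')) * y ^ (2 * b' + (b + c)) * z ^ (2 * c' + (b + c)) *
        w ^ (2 * d' + (b' + c')) := by ring
  rw [eL, eR, show 2 * a + (b + c) = 2 * a' + (b' + c') from by omega,
    show 2 * b + (b' + c') = 2 * b' + (b + c) from by omega,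
    show 2 * c + (b' + c') = 2 * c' + (b + c) from by omega,
    show 2 * d + (b + c) = 2 * d' + (b' + c') from by omega]

lemma final_alg (p11 p10 p01 p00 : ℝ) (h11 : 0 < p11) (h10 : 0 < p10) (h01 : 0 < p01)
    (h00 : 0 < p00) (a b c d a' b' c' d' : ℕ)
    (h1 : a + b = a' + b') (h2 : a + c = a' + c')
    (h3 : a + b + c + d = a' + b' + c' + d') :
    p11 ^ a * p10 ^ b * p01 ^ c * p00 ^ d * Real.sqrt (p01 * p10 / (p00 * p11)) ^ (b' + c') =
      p11 ^ a' * p10 ^ b' * p01 ^ c' * p00 ^ d' *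
        Real.sqrt (p01 * p10 / (p00 * p11)) ^ (b + c) := by
  set r := Real.sqrt (p01 * p10 / (p00 * p11)) with hrdef
  have hr0 : (0:ℝ) ≤ r := Real.sqrt_nonneg _
  have hr2 : r ^ 2 = p01 * p10 / (p00 * p11) := Real.sq_sqrt (by positivity)
  set L := p11 ^ a * p10 ^ b * p01 ^ c * p00 ^ d * r ^ (b' + c') with hLdef
  set R := p11 ^ a' * p10 ^ b' * p01 ^ c' * p00 ^ d' * r ^ (b + c) with hRdef
  have hL0 : (0:ℝ) ≤ L := by positivity
  have hR0 : (0:ℝ) ≤ R := by positivity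
  have hne : (p00 * p11) ^ (b' + c') ≠ 0 := by positivity
  have hne' : (p00 * p11) ^ (b + c) ≠ 0 := by positivity
  have eL : L ^ 2 = (p11 ^ a * p10 ^ b * p01 ^ c * p00 ^ d) ^ 2 * (p01 * p10) ^ (b' + c') /
      (p00 * p11) ^ (b' + c') := by
    calc L ^ 2 = (p11 ^ a * p10 ^ b * p01 ^ c * p00 ^ d) ^ 2 * (r ^ 2) ^ (b' + c') := by
          rw [hLdef]; ring
      _ = _ := by rw [hr2, div_pow, mul_div_assoc]
  have eR : R ^ 2 = (p11 ^ a' * p10 ^ b' * p01 ^ c' * p00 ^ d') ^ 2 * (p01 * p10) ^ (b + c) /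
      (p00 * p11) ^ (b + c) := by
    calc R ^ 2 = (p11 ^ a' * p10 ^ b' * p01 ^ c' * p00 ^ d') ^ 2 * (r ^ 2) ^ (b + c) := by
          rw [hRdef]; ring
      _ = _ := by rw [hr2, div_pow, mul_div_assoc]
  have hsq : L ^ 2 = R ^ 2 := by
    rw [eL, eR, div_eq_div_iff (by positivity) (by positivity)]
    exact mono_id p11 p10 p01 p00 a b c d a' b' c' d' h1 h2 h3
  calc L = Real.sqrt (L ^ 2) := (Real.sqrt_sq hL0).symm
    _ = Real.sqrt (R ^ 2) := by rw [hsq]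
    _ = R := Real.sqrt_sq hR0

lemma ERPP_eval (n : ℕ) (p : Bool → Bool → ℝ) (gc gb : FGraph n) (π : Equiv.Perm (Fin n)) :
    ERPermProb n p (fun σ gab => σ = π ∧ anonymize σ gab.1 = gc ∧ gab.2 = gb)
      = (∏ e : VPairs n, p (gc (pairPerm π e)) (gb e)) / (Nat.factorial n) := by
  classical
  unfold ERPermProb
  congr 1
  rw [Finset.sum_eq_single π]
  · rw [Finset.sum_eq_single ((fun e => gc (pairPerm π e), gb) : FGraph n × FGraph n)]
    · have hco : anonymize π (fun e => gc (pairPerm π e)) = gc := by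
        funext e
        simp [anonymize]
      rw [if_pos ⟨rfl, hco, rfl⟩, one_mul]
    · intro gab _ hne
      rw [if_neg, zero_mul]
      rintro ⟨-, hone, htwo⟩
      apply hne
      have hfst : gab.1 = fun e => gc (pairPerm π e) := by
        funext e
        have := congrFun hone (pairPerm π e)
        simpa [anonymize] using this
      exact Prod.ext hfst htwo
    · intro habs
      exact absurd (Finset.mem_univ _) habs
  · intro σ _ hσ
    apply Finset.sum_eq_zero
    intro gab _
    rw [if_neg (by tauto), zero_mul]
  · intro habs
    exact absurd (Finset.mem_univ _) habs

end Aux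

/-- the posterior probability of `π` given `(G_c, G_b)` is proportional
to `(p01·p10/(p00·p11))^{Δ(g_c∘l(π), g_b)/2}`. -/
theorem posterior_propto
    (n : ℕ) (p11 p10 p01 p00 : ℝ)
    (hpos : 0 < p11 ∧ 0 < p10 ∧ 0 < p01 ∧ 0 < p00)
    (hsum : p11 + p10 + p01 + p00 = 1)
    (gc gb : FGraph n) (π π' : Equiv.Perm (Fin n)) :
    ERPermProb n (pv p11 p10 p01 p00)
        (fun σ gab => σ = π ∧ anonymize σ gab.1 = gc ∧ gab.2 = gb) *
      Real.sqrt (p01 * p10 / (p00 * p11)) ^ hamming (fun e => gc (pairPerm π' e)) gb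
    = ERPermProb n (pv p11 p10 p01 p00)
        (fun σ gab => σ = π' ∧ anonymize σ gab.1 = gc ∧ gab.2 = gb) *
      Real.sqrt (p01 * p10 / (p00 * p11)) ^ hamming (fun e => gc (pairPerm π e)) gb := by
  classical
  obtain ⟨h11, h10, h01, h00⟩ := hpos
  rw [ERPP_eval, ERPP_eval, div_mul_eq_mul_div, div_mul_eq_mul_div]
  congr 1
  simp only [prodPV]
  rw [← tcL1 (fun e => gc (pairPerm π' e)) gb, ← tcL1 (fun e => gc (pairPerm π e)) gb]
  have hA1 : typeCount (fun e => gc (pairPerm π e)) gb true true +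
      typeCount (fun e => gc (pairPerm π e)) gb true false =
      typeCount (fun e => gc (pairPerm π' e)) gb true true +
      typeCount (fun e => gc (pairPerm π' e)) gb true false := by
    rw [tcL2, tcL2]
    exact (card_comp (pairPerm π) gc).trans (card_comp (pairPerm π') gc).symm
  have hA2 : typeCount (fun e => gc (pairPerm π e)) gb true true +
      typeCount (fun e => gc (pairPerm π e)) gb false true =
      typeCount (fun e => gc (pairPerm π' e)) gb true true +
      typeCount (fun e => gc (pairPerm π' e)) gb false true := by
    rw [tcL3, tcL3]
  have hA3 : typeCount (fun e => gc (pairPerm π e)) gb true true +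
      typeCount (fun e => gc (pairPerm π e)) gb true false +
      typeCount (fun e => gc (pairPerm π e)) gb false true +
      typeCount (fun e => gc (pairPerm π e)) gb false false =
      typeCount (fun e => gc (pairPerm π' e)) gb true true +
      typeCount (fun e => gc (pairPerm π' e)) gb true false +
      typeCount (fun e => gc (pairPerm π' e)) gb false true +
      typeCount (fun e => gc (pairPerm π' e)) gb false false := by
    rw [tcL4, tcL4]
  exact final_alg p11 p10 p01 p00 h11 h10 h01 h00 _ _ _ _ _ _ _ _ hA1 hA2 hA3
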